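/- Let A be a commutative noetherian ring with only finitely many maximal ideals (a semi-local ring). Let X₀ → X₁ → X₂ → ⋯ be a sequence of A-modules of finite length which is a Cauchy sequence, meaning: for every A-module C of finite length there exists N such that the induced map Hom_A(C, Xᵢ) → Hom_A(C, Xⱼ) is bijective for all j ≥ i ≥ N. Then the colimit colimₙ Xₙ is an artinian A-module. -/

import Mathlib

universe u

open CategoryTheory CategoryTheory.Limits

section Helpers

variable {A : Type*} [CommRing A] {M : Type*} [AddCommGroup M] [Module A M]

/-- Stabilization of antitone chains of submodules all contained in an artinian submodule. -/
lemma stab_of_le (S : Submodule A M) (hart : IsArtinian A S)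
    (g : ℕ → Submodule A M) (hle : ∀ i, g i ≤ S) (hmono : ∀ i j, i ≤ j → g j ≤ g i) :
    ∃ n, ∀ m, n ≤ m → g m = g n := by
  have hstab := IsArtinian.monotone_stabilizes (R := A) (M := S)
    ⟨fun i => OrderDual.toDual (Submodule.comap S.subtype (g i)),
      fun i j hij => Submodule.comap_mono (hmono i j hij)⟩
  obtain ⟨n, hn⟩ := hstab
  refine ⟨n, fun m hm => ?_⟩
  have := hn m hm
  change Submodule.comap S.subtype (g n) = Submodule.comap S.subtype (g m) at this
  have h1 : Submodule.map S.subtype (Submodule.comap S.subtype (g m))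
      = Submodule.map S.subtype (Submodule.comap S.subtype (g n)) := by rw [this]
  rwa [Submodule.map_comap_subtype, Submodule.map_comap_subtype,
    inf_eq_right.mpr (hle m), inf_eq_right.mpr (hle n)] at h1

/-- Melkersson's lemma: if `M` is `x`-power-torsion and the `x`-torsion of `M` is artinian,
then `M` is artinian. -/
theorem melkersson (x : A) (htor : ∀ y : M, ∃ k : ℕ, x ^ k • y = 0)
    (hart : IsArtinian A (Submodule.torsionBy A M x)) : IsArtinian A M := by
  rw [← monotone_stabilizes_iff_artinian]
  intro F
  set N : ℕ → Submodule A M := fun i => OrderDual.ofDual (F i) with hN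
  have hNanti : ∀ i j, i ≤ j → N j ≤ N i := fun i j hij => F.monotone hij
  -- the double filtration
  set AA : ℕ → ℕ → Submodule A M := fun i k =>
    Submodule.map (LinearMap.lsmul A M (x ^ k))
      (N i ⊓ Submodule.torsionBy A M (x ^ (k + 1))) with hAA
  have hAAle : ∀ i k, AA i k ≤ Submodule.torsionBy A M x := by
    rintro i k _ ⟨z, ⟨hz1, hz2⟩, rfl⟩
    simp only [SetLike.mem_coe, Submodule.mem_torsionBy_iff] at hz2 ⊢
    simp only [LinearMap.lsmul_apply]
    rw [smul_smul, ← pow_succ']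
    exact hz2
  have hAAi : ∀ i j k, i ≤ j → AA j k ≤ AA i k := fun i j k hij =>
    Submodule.map_mono (inf_le_inf_right _ (hNanti i j hij))
  have hAAk : ∀ i k, AA i (k + 1) ≤ AA i k := by
    rintro i k _ ⟨z, ⟨hz1, hz2⟩, rfl⟩
    simp only [SetLike.mem_coe, Submodule.mem_torsionBy_iff] at hz1 hz2
    refine ⟨x • z, ⟨(N i).smul_mem x hz1, ?_⟩, ?_⟩
    · simp only [SetLike.mem_coe, Submodule.mem_torsionBy_iff]
      rw [smul_smul, ← pow_succ]
      exact hz2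
    · simp only [LinearMap.lsmul_apply]
      rw [smul_smul, ← pow_succ]
  have hAAkle : ∀ i k l, k ≤ l → AA i l ≤ AA i k := by
    intro i k l h
    induction h with
    | refl => exact le_rfl
    | step _ ih => exact le_trans (hAAk i _) ih
  -- diagonal stabilization
  obtain ⟨t, ht⟩ := stab_of_le (Submodule.torsionBy A M x) hart (fun i => AA i i)
    (fun i => hAAle i i) (fun i j hij => le_trans (hAAi i j j hij) (hAAkle i i j hij))
  -- column stabilization
  have hcol : ∀ k, ∃ n, ∀ m, n ≤ m → AA m k = AA n k := fun k =>
    stab_of_le (Submodule.torsionBy A M x) hart (fun i => AA i k)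
      (fun i => hAAle i k) (fun i j hij => hAAi i j k hij)
  choose tcol htcol using hcol
  set T : ℕ := max t ((Finset.range t).sup tcol) with hT
  have hdiag : ∀ i k, t ≤ i → t ≤ k → AA i k = AA t t := by
    intro i k hi hk
    apply le_antisymm
    · exact le_trans (hAAi t i k hi) (hAAkle t t k hk)
    · calc AA t t = AA (max i k) (max i k) := (ht _ (le_trans hi (le_max_left _ _))).symm
        _ ≤ AA i (max i k) := hAAi i _ _ (le_max_left _ _)
        _ ≤ AA i k := hAAkle i k _ (le_max_right _ _)
  have hstable : ∀ i k, T ≤ i → AA i k = AA T k := by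
    intro i k hi
    rcases le_or_gt t k with hk | hk
    · have h1 : t ≤ T := le_max_left _ _
      rw [hdiag i k (le_trans h1 hi) hk, hdiag T k h1 hk]
    · have hk' : tcol k ≤ T :=
        le_trans (Finset.le_sup (Finset.mem_range.mpr hk)) (le_max_right _ _)
      rw [htcol k i (le_trans hk' hi), htcol k T hk']
  refine ⟨T, fun m hm => ?_⟩
  have key : ∀ j, T ≤ j → N (j + 1) = N j := by
    intro j hj
    refine le_antisymm (hNanti j (j + 1) (Nat.le_succ j)) ?_
    have main : ∀ k, ∀ y, y ∈ N j → x ^ k • y = 0 → y ∈ N (j + 1) := by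
      intro k
      induction k with
      | zero =>
        intro y hy hk
        rw [pow_zero, one_smul] at hk
        rw [hk]; exact Submodule.zero_mem _
      | succ k ih =>
        intro y hy hk
        have hmem : x ^ k • y ∈ AA j k :=
          ⟨y, ⟨hy, (Submodule.mem_torsionBy_iff _ _).mpr hk⟩, rfl⟩
        rw [hstable j k hj, ← hstable (j + 1) k (le_trans hj (Nat.le_succ j))] at hmem
        obtain ⟨z, ⟨hz1, hz2⟩, hz3⟩ := hmem
        simp only [LinearMap.lsmul_apply] at hz3
        have hyz : y - z ∈ N j := (N j).sub_mem hy (hNanti j (j + 1) (Nat.le_succ j) hz1)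
        have hyzk : x ^ k • (y - z) = 0 := by rw [smul_sub, hz3, sub_self]
        have h1 := ih (y - z) hyz hyzk
        have h2 : y - z + z ∈ N (j + 1) := (N (j + 1)).add_mem h1 hz1
        rwa [sub_add_cancel] at h2
    intro y hy
    obtain ⟨k, hk⟩ := htor y
    exact main k y hy hk
  have hfin : ∀ m, T ≤ m → N m = N T := by
    intro m hm
    induction m with
    | zero => rw [Nat.le_zero.mp hm]
    | succ m ih =>
      rcases Nat.lt_or_ge T (m + 1) with h | h
      · have hm' : T ≤ m := Nat.lt_succ_iff.mp h
        rw [key m hm', ih hm']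
      · rw [Nat.le_antisymm hm h]
  exact (OrderDual.ofDual_inj.mp (hfin m hm)).symm

end Helpers

section ListTorsion

variable {A : Type*} [CommRing A]

/-- Iterated Melkersson lemma over a list of ring elements. -/
theorem artinian_of_list_torsion : ∀ (l : List A) (M : Type u) (_ : AddCommGroup M)
    (_ : Module A M),
    (∀ y : M, ∀ a ∈ l, ∃ k : ℕ, a ^ k • y = 0) →
    IsArtinian A (Submodule.torsionBySet A M {a | a ∈ l}) → IsArtinian A M := by
  intro l
  induction l with
  | nil =>
    intro M _ _ htor hart
    have h : Submodule.torsionBySet A M {a | a ∈ ([] : List A)} = ⊤ := by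
      ext y
      simp [Submodule.mem_torsionBySet_iff]
    rw [h] at hart
    exact isArtinian_of_linearEquiv Submodule.topEquiv
  | cons x l ih =>
    intro M _ _ htor hart
    set S := Submodule.torsionBy A M x with hS
    have hmem : ∀ y : ↥(Submodule.torsionBySet A S {a | a ∈ l}),
        (((y : S) : M)) ∈ Submodule.torsionBySet A M {a | a ∈ x :: l} := by
      intro y
      rw [Submodule.mem_torsionBySet_iff]
      rintro ⟨a, ha⟩
      rcases List.mem_cons.mp ha with rfl | ha'
      · exact (Submodule.mem_torsionBy_iff _ _).mp (y : S).2
      · have := (Submodule.mem_torsionBySet_iff _ _).mp y.2 ⟨a, ha'⟩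
        have h2 : ((a • (y : S) : S) : M) = 0 := by rw [this]; rfl
        simpa using h2
    haveI hartS : IsArtinian A S := by
      apply ih S _ _
      · intro y a ha
        obtain ⟨k, hk⟩ := htor (y : M) a (List.mem_cons_of_mem x ha)
        refine ⟨k, Subtype.ext ?_⟩
        simpa using hk
      · refine isArtinian_of_injective
          (LinearMap.codRestrict (Submodule.torsionBySet A M {a | a ∈ x :: l})
            (S.subtype.comp (Submodule.torsionBySet A S {a | a ∈ l}).subtype)
            hmem) ?_
        intro a b hab
        have h3 := congrArg Subtype.val hab
        exact Subtype.val_injective (Subtype.val_injective h3)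
    exact melkersson x (fun y => htor y x List.mem_cons_self) hartS

/-- Finite length modules are annihilated by a power of any ideal contained in all maximals. -/
theorem fl_killed (J : Ideal A) (hJ : ∀ P : Ideal A, P.IsMaximal → J ≤ P) :
    ∀ (M : Type u) (_ : AddCommGroup M) (_ : Module A M), IsFiniteLength A M →
    ∃ k : ℕ, J ^ k ≤ Module.annihilator A M := by
  intro M _ _ h
  induction h with
  | of_subsingleton =>
    refine ⟨1, fun a _ => Module.mem_annihilator.mpr fun m => ?_⟩
    rw [Subsingleton.elim m 0, smul_zero]
  | @of_simple_quotient M _ _ N _ _ ih =>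
    obtain ⟨k, hk⟩ := ih
    refine ⟨k + 1, ?_⟩
    rw [pow_succ]
    rw [Ideal.mul_le]
    intro r hr s hs
    rw [Module.mem_annihilator]
    intro m
    have h1 : s • m ∈ N := by
      rw [← Submodule.Quotient.mk_eq_zero]
      have h2 : s ∈ Module.annihilator A (M ⧸ N) :=
        hJ _ (IsSimpleModule.annihilator_isMaximal) hs
      rw [Submodule.Quotient.mk_smul]
      exact Module.mem_annihilator.mp h2 _
    have h3 : r • (⟨s • m, h1⟩ : N) = 0 := Module.mem_annihilator.mp (hk hr) _
    have h4 : ((r • (⟨s • m, h1⟩ : N) : N) : M) = r • (s • m) := rfl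
    rw [mul_smul]
    rw [← h4, h3]
    rfl
end ListTorsion

section QuotJacobson

variable {A : Type u} [CommRing A] [IsNoetherianRing A]

theorem quotJacobson_fl (hsemilocal : {I : Ideal A | I.IsMaximal}.Finite) :
    IsFiniteLength A (A ⧸ ((⊥ : Ideal A).jacobson : Submodule A A)) := by
  rw [isFiniteLength_iff_isNoetherian_isArtinian]
  set J : Submodule A A := ((⊥ : Ideal A).jacobson : Submodule A A) with hJdef
  refine ⟨inferInstance, ?_⟩
  haveI := hsemilocal.fintype
  have hle : ∀ I : {I : Ideal A | I.IsMaximal}, J ≤ ((I : Ideal A) : Submodule A A) :=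
    fun I => sInf_le ⟨bot_le, I.2⟩
  let φ : (A ⧸ J) →ₗ[A] ((I : {I : Ideal A | I.IsMaximal}) → A ⧸ ((I : Ideal A) : Submodule A A)) :=
    LinearMap.pi (fun I => Submodule.mapQ J ((I : Ideal A) : Submodule A A) LinearMap.id (hle I))
  haveI : ∀ I : {I : Ideal A | I.IsMaximal}, IsArtinian A (A ⧸ ((I : Ideal A) : Submodule A A)) := by
    intro I
    haveI : IsSimpleModule A (A ⧸ ((I : Ideal A) : Submodule A A)) :=
      isSimpleModule_iff_isCoatom.mpr (Ideal.isMaximal_def.mp I.2)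
    haveI : Module.Finite A (A ⧸ ((I : Ideal A) : Submodule A A)) :=
      Module.Finite.of_surjective (Submodule.mkQ _) (Submodule.Quotient.mk_surjective _)
    infer_instance
  refine isArtinian_of_injective φ ?_
  rw [← LinearMap.ker_eq_bot, eq_bot_iff]
  intro y hy
  obtain ⟨a, rfl⟩ := Submodule.Quotient.mk_surjective J y
  rw [LinearMap.mem_ker] at hy
  have ha : ∀ I : {I : Ideal A | I.IsMaximal}, a ∈ (I : Ideal A) := by
    intro I
    have h1 := congrFun hy I
    simp only [φ, LinearMap.pi_apply, Pi.zero_apply, Submodule.mapQ_apply,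
      LinearMap.id_apply] at h1
    rwa [Submodule.Quotient.mk_eq_zero] at h1
  have haJ : a ∈ (⊥ : Ideal A).jacobson := by
    rw [Ideal.jacobson]
    exact Ideal.mem_sInf.mpr (fun {I} hI => ha ⟨I, hI.2⟩)
  simpa using (Submodule.Quotient.mk_eq_zero J).mpr haJ


end QuotJacobson

/-- Over a commutative noetherian semi-local ring, the colimit of a Cauchy
sequence of finite length modules is an artinian module. -/
theorem stmt_14 {A : Type u} [CommRing A] [IsNoetherianRing A]
    (hsemilocal : {I : Ideal A | I.IsMaximal}.Finite)
    (M : ℕ → ModuleCat.{u} A) (f : ∀ n, M n ⟶ M (n + 1))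
    (hfl : ∀ n, IsFiniteLength A (M n))
    (hCauchy : ∀ (C : ModuleCat.{u} A), IsFiniteLength A C →
      ∃ N : ℕ, ∀ (i j : ℕ) (hij : i ≤ j), N ≤ i →
        Function.Bijective (fun g : C ⟶ (Functor.ofSequence f).obj i =>
          g ≫ (Functor.ofSequence f).map (homOfLE hij))) :
    IsArtinian A ↥(colimit (Functor.ofSequence f)) := by
  classical
  haveI : PreservesFilteredColimitsOfSize.{0, 0} (forget (ModuleCat.{u} A)) :=
    (preservesFilteredColimitsOfSize_of_univLE.{u, u, 0, 0} (forget (ModuleCat.{u} A)) :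
      PreservesFilteredColimitsOfSize.{0, 0} _)
  set F := Functor.ofSequence f with hF
  set J : Ideal A := (⊥ : Ideal A).jacobson with hJ
  have hJle : ∀ P : Ideal A, P.IsMaximal → J ≤ P := fun P hP => sInf_le ⟨bot_le, hP⟩
  obtain ⟨s, hs⟩ : (J : Submodule A A).FG := IsNoetherian.noetherian _
  -- a helper for functoriality
  have hcomp : ∀ (i j k : ℕ) (hij : i ≤ j) (hjk : j ≤ k) (ξ : ↥(F.obj i)),
      F.map (homOfLE (le_trans hij hjk)) ξ = F.map (homOfLE hjk) (F.map (homOfLE hij) ξ) := by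
    intro i j k hij hjk ξ
    have h1 : F.map (homOfLE hij) ≫ F.map (homOfLE hjk) = F.map (homOfLE (le_trans hij hjk)) := by
      rw [← F.map_comp, homOfLE_comp]
    rw [← h1]
    rfl
  have hw : ∀ (i j : ℕ) (hij : i ≤ j) (ξ : ↥(F.obj i)),
      colimit.ι F j (F.map (homOfLE hij) ξ) = colimit.ι F i ξ := by
    intro i j hij ξ
    have h1 := colimit.w F (homOfLE hij)
    rw [← h1]
    rfl
  -- every element of the colimit is power-torsion for each generator of J
  have htor : ∀ (y : ↥(colimit F)), ∀ a ∈ s.toList, ∃ k : ℕ, a ^ k • y = 0 := by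
    intro y a ha
    obtain ⟨n, ξ, hξ0⟩ := Limits.Concrete.colimit_exists_rep F y
    have hξ : (colimit.ι F n) ξ = y := hξ0
    obtain ⟨k, hk⟩ := fl_killed J hJle ↥(F.obj n) inferInstance inferInstance (hfl n)
    have haJ : a ∈ J := by
      rw [← hs]
      exact Submodule.subset_span (Finset.mem_coe.mpr (Finset.mem_toList.mp ha))
    refine ⟨k, ?_⟩
    have h1 : a ^ k • ξ = 0 :=
      Module.mem_annihilator.mp (hk (Ideal.pow_mem_pow haJ k)) ξ
    rw [← hξ, ← map_smul, h1, map_zero]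
  -- the socle is artinian, via the Cauchy condition with C = A ⧸ J
  have hCfl : IsFiniteLength A ↥(ModuleCat.of A (A ⧸ (J : Submodule A A))) :=
    quotJacobson_fl hsemilocal
  obtain ⟨N₀, hN₀⟩ := hCauchy (ModuleCat.of A (A ⧸ (J : Submodule A A))) hCfl
  have hsoc : IsArtinian A
      ↥(Submodule.torsionBySet A ↥(colimit F) {a | a ∈ s.toList}) := by
    set T₀ := Submodule.torsionBySet A ↥(F.obj N₀) {a | a ∈ s.toList} with hT₀
    have hmem : ∀ y : ↥T₀,
        (colimit.ι F N₀) (y : ↥(F.obj N₀)) ∈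
          Submodule.torsionBySet A ↥(colimit F) {a | a ∈ s.toList} := by
      intro y
      rw [Submodule.mem_torsionBySet_iff]
      rintro ⟨a, ha⟩
      have h1 : a • (y : ↥(F.obj N₀)) = 0 :=
        (Submodule.mem_torsionBySet_iff _ _).mp y.2 ⟨a, ha⟩
      rw [← map_smul, h1, map_zero]
    set Φ : ↥T₀ →ₗ[A] ↥(Submodule.torsionBySet A ↥(colimit F) {a | a ∈ s.toList}) :=
      LinearMap.codRestrict _ ((colimit.ι F N₀).hom.comp T₀.subtype)
        hmem with hΦ
    have hsurj : Function.Surjective Φ := by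
      rintro ⟨y, hy⟩
      obtain ⟨n, ξ, hξ0⟩ := Limits.Concrete.colimit_exists_rep F y
      have hξ : (colimit.ι F n) ξ = y := hξ0
      set n' := max n N₀ with hn'
      set ξ₁ := F.map (homOfLE (le_max_left n N₀)) ξ with hξ₁def
      have hξ₁ : colimit.ι F n' ξ₁ = y := by rw [hξ₁def, hw, hξ]
      have hdie : ∀ a ∈ s.toList, ∃ (m : ℕ) (h : n' ≤ m),
          F.map (homOfLE h) (a • ξ₁) = 0 := by
        intro a ha
        have h0 : colimit.ι F n' (a • ξ₁) = 0 := by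
          rw [map_smul, hξ₁]
          exact (Submodule.mem_torsionBySet_iff _ _).mp hy ⟨a, ha⟩
        obtain ⟨j', i, hi⟩ := Limits.Concrete.colimit_rep_eq_zero A F n' (a • ξ₁) h0
        have hi2 : F.map (homOfLE (leOfHom i)) (a • ξ₁) = 0 := hi
        exact ⟨j', leOfHom i, hi2⟩
      have huni : ∀ l : List A,
          (∀ a ∈ l, ∃ (m : ℕ) (h : n' ≤ m), F.map (homOfLE h) (a • ξ₁) = 0) →
          ∃ (m : ℕ) (h : n' ≤ m), ∀ a ∈ l, a • (F.map (homOfLE h) ξ₁) = 0 := by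
        intro l
        induction l with
        | nil => exact fun _ => ⟨n', le_refl _, by intro a ha; cases ha⟩
        | cons b l ih =>
          intro hb
          obtain ⟨m1, h1, hm1⟩ := ih (fun a ha => hb a (List.mem_cons_of_mem b ha))
          obtain ⟨m2, h2, hm2⟩ := hb b List.mem_cons_self
          refine ⟨max m1 m2, le_trans h1 (le_max_left m1 m2), ?_⟩
          intro a ha
          rcases List.mem_cons.mp ha with rfl | ha'
          · rw [show le_trans h1 (le_max_left m1 m2) = le_trans h2 (le_max_right m1 m2) from rfl]
            rw [← map_smul, hcomp n' m2 (max m1 m2) h2 (le_max_right m1 m2) (a • ξ₁),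
              hm2, map_zero]
          · rw [hcomp n' m1 (max m1 m2) h1 (le_max_left m1 m2) ξ₁, ← map_smul,
              hm1 a ha', map_zero]
      obtain ⟨m, h, hall⟩ := huni s.toList hdie
      set ξ₂ := F.map (homOfLE h) ξ₁ with hξ₂def
      have hξ₂ : colimit.ι F m ξ₂ = y := by rw [hξ₂def, hw, hξ₁]
      have hJkill : ∀ a ∈ (J : Submodule A A), a • ξ₂ = 0 := by
        intro a haJ
        rw [← hs] at haJ
        induction haJ using Submodule.span_induction with
        | mem c hc => exact hall c (Finset.mem_toList.mpr hc)
        | zero => simp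
        | add x y hx hy hx' hy' => rw [add_smul, hx', hy', add_zero]
        | smul r x hx hx' => rw [smul_eq_mul, mul_smul, hx', smul_zero]
      set g' : (A ⧸ (J : Submodule A A)) →ₗ[A] ↥(F.obj m) :=
        Submodule.liftQ _ (LinearMap.toSpanSingleton A _ ξ₂)
          (fun a haJ => by
            rw [LinearMap.mem_ker, LinearMap.toSpanSingleton_apply]
            exact hJkill a haJ) with hg'
      have hij : N₀ ≤ m := le_trans (le_max_right n N₀) h
      obtain ⟨g, hg⟩ := (hN₀ N₀ m hij (le_refl N₀)).2 (ModuleCat.ofHom g')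
      set η := g (Submodule.Quotient.mk 1) with hη
      have hηmem : η ∈ T₀ := by
        rw [hT₀, Submodule.mem_torsionBySet_iff]
        rintro ⟨a, ha⟩
        have haJ' : a ∈ (J : Submodule A A) := by
          rw [← hs]
          exact Submodule.subset_span (Finset.mem_coe.mpr (Finset.mem_toList.mp ha))
        have h1 : a • (Submodule.Quotient.mk 1 : A ⧸ (J : Submodule A A)) = 0 := by
          rw [← Submodule.Quotient.mk_smul, smul_eq_mul, mul_one,
            Submodule.Quotient.mk_eq_zero]
          exact haJ'
        rw [hη, ← map_smul, h1, map_zero]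
      refine ⟨⟨η, hηmem⟩, ?_⟩
      apply Subtype.ext
      have hg1 : F.map (homOfLE hij) η = ξ₂ := by
        have h2 := congrFun (congrArg (fun (h : ModuleCat.of A (A ⧸ (J : Submodule A A)) ⟶ F.obj m) => ⇑h.hom) hg)
          (Submodule.Quotient.mk 1)
        have h3 : (g ≫ F.map (homOfLE hij)) (Submodule.Quotient.mk 1)
            = g' (Submodule.Quotient.mk 1) := h2
        have h4 : F.map (homOfLE hij) (g (Submodule.Quotient.mk 1))
            = g' (Submodule.Quotient.mk 1) := h3
        rw [hη, h4, hg', Submodule.liftQ_apply, LinearMap.toSpanSingleton_apply, one_smul]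
      show colimit.ι F N₀ η = y
      rw [← hw N₀ m hij, hg1, hξ₂]
    haveI : IsArtinian A ↥(F.obj N₀) :=
      ((isFiniteLength_iff_isNoetherian_isArtinian).mp (hfl N₀)).2
    exact isArtinian_of_surjective _ Φ hsurj
  exact artinian_of_list_torsion s.toList ↥(colimit F) inferInstance inferInstance htor hsoc
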